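/- Let d ≥ 1 and n = 3d. The graph Γ whose vertices are the even-weight binary vectors of length n, with two vectors adjacent iff their difference has Hamming weight 2d, is locally K(n, d). -/

import Mathlib

open Finset

/-- The Kneser graph `K(n,d)`. -/
def kneser (n d : ℕ) : SimpleGraph {s : Finset (Fin n) // s.card = d} where
  Adj A B := A ≠ B ∧ Disjoint A.val B.val
  symm := ⟨fun _ _ h => ⟨h.1.symm, h.2.symm⟩⟩
  loopless := ⟨fun _ h => h.1 rfl⟩

/-- Hamming weight of a binary vector. -/
def wt {n : ℕ} (v : Fin n → ZMod 2) : ℕ := (Finset.univ.filter fun i => v i ≠ 0).card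

/-- The graph on the even-weight binary vectors of length `n`,
adjacent when their difference has Hamming weight `k`. -/
def evenGraph (n k : ℕ) : SimpleGraph {v : Fin n → ZMod 2 // Even (wt v)} where
  Adj u v := u ≠ v ∧ wt (u.val + v.val) = k
  symm := ⟨fun _ _ h => ⟨h.1.symm, by rw [add_comm]; exact h.2⟩⟩
  loopless := ⟨fun _ h => h.1 rfl⟩

/-- `Γ` is locally `Δ`. -/
def IsLocally {V W : Type*} (Γ : SimpleGraph V) (Δ : SimpleGraph W) : Prop :=
  ∀ v : V, Nonempty ((Γ.induce (Γ.neighborSet v)) ≃g Δ)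

open scoped symmDiff

/-- Support of a binary vector. -/
def supp {n : ℕ} (v : Fin n → ZMod 2) : Finset (Fin n) :=
  Finset.univ.filter fun i => v i ≠ 0

lemma wt_eq_card_supp {n : ℕ} (v : Fin n → ZMod 2) : wt v = (supp v).card := rfl

lemma mem_supp {n : ℕ} {v : Fin n → ZMod 2} {i : Fin n} : i ∈ supp v ↔ v i ≠ 0 := by
  simp [supp]

lemma supp_add {n : ℕ} (a b : Fin n → ZMod 2) : supp (a + b) = supp a ∆ supp b := by
  ext i
  simp only [mem_supp, mem_symmDiff, Pi.add_apply]
  rcases (by decide : ∀ x : ZMod 2, x = 0 ∨ x = 1) (a i) with h | h <;>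
    rcases (by decide : ∀ x : ZMod 2, x = 0 ∨ x = 1) (b i) with h' | h' <;>
    simp [h, h'] <;> decide

/-- indicator vector of a finite set -/
def chi {n : ℕ} (s : Finset (Fin n)) : Fin n → ZMod 2 :=
  fun i => if i ∈ s then 1 else 0

lemma supp_chi {n : ℕ} (s : Finset (Fin n)) : supp (chi s) = s := by
  ext i; by_cases h : i ∈ s <;> simp [mem_supp, chi, h]

lemma chi_supp {n : ℕ} (w : Fin n → ZMod 2) : chi (supp w) = w := by
  funext i
  rcases (by decide : ∀ x : ZMod 2, x = 0 ∨ x = 1) (w i) with h | h <;>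
    simp [chi, mem_supp, h]

lemma add_add_self {n : ℕ} (v w : Fin n → ZMod 2) : v + (v + w) = w := by
  funext i
  simp only [Pi.add_apply, ← add_assoc]
  rcases (by decide : ∀ x : ZMod 2, x + x = 0) (v i) with h
  rw [h, zero_add]

lemma card_symmDiff_aux {n : ℕ} (A B : Finset (Fin n)) :
    (A ∆ B).card + (A ∩ B).card = (A ∪ B).card := by
  rw [symmDiff_eq_sup_sdiff_inf]
  rw [card_sdiff_of_subset (le_trans inf_le_left le_sup_left)]
  have h : (A ⊓ B).card ≤ (A ⊔ B).card :=
    card_le_card (le_trans inf_le_left le_sup_left)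
  simp only [sup_eq_union, inf_eq_inter] at *
  omega

lemma even_wt_add_iff {n : ℕ} (a b : Fin n → ZMod 2) :
    Even (wt (a + b)) ↔ (Even (wt a) ↔ Even (wt b)) := by
  have h1 := card_symmDiff_aux (supp a) (supp b)
  have h2 := card_union_add_card_inter (supp a) (supp b)
  rw [wt_eq_card_supp, wt_eq_card_supp, wt_eq_card_supp, supp_add]
  rw [Nat.even_iff, Nat.even_iff, Nat.even_iff]
  omega

/-- For `d ≥ 1` and `n = 3d`, the graph on even-weight binary vectors of length `n`,
adjacent when their difference has weight `2d`, is locally `K(n,d)`. -/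
theorem evenGraph_isLocally_kneser (d : ℕ) (hd : 1 ≤ d) :
    IsLocally (evenGraph (3 * d) (2 * d)) (kneser (3 * d) d) := by
  intro v
  have hcarduniv : (Finset.univ : Finset (Fin (3 * d))).card = 3 * d := by simp
  have hA : ∀ u : ↥((evenGraph (3 * d) (2 * d)).neighborSet v),
      (supp (u.1.1 + v.1)).card = 2 * d := by
    rintro ⟨u, hu⟩
    have h := hu.2
    rw [wt_eq_card_supp, add_comm] at h
    exact h
  have hAc : ∀ u : ↥((evenGraph (3 * d) (2 * d)).neighborSet v),
      (supp (u.1.1 + v.1))ᶜ.card = d := by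
    intro u
    rw [card_compl, hA u, Fintype.card_fin]
    omega
  refine ⟨⟨⟨fun u => ⟨(supp (u.1.1 + v.1))ᶜ, hAc u⟩, ?_, ?_, ?_⟩, ?_⟩⟩
  · -- invFun
    intro s
    have hwchi : wt (chi (s.1ᶜ) : Fin (3 * d) → ZMod 2) = 2 * d := by
      rw [wt_eq_card_supp, supp_chi, card_compl, s.2, Fintype.card_fin]
      omega
    refine ⟨⟨v.1 + chi (s.1ᶜ), ?_⟩, ?_, ?_⟩
    · rw [even_wt_add_iff, hwchi]
      simp [v.2]
    · intro h
      have h2 : chi (s.1ᶜ) = (0 : Fin (3 * d) → ZMod 2) := by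
        have h3 : v.1 = v.1 + chi (s.1ᶜ) := congrArg Subtype.val h
        funext i
        have := congrFun h3 i
        simp only [Pi.add_apply] at this
        have h4 := congrArg (fun x => v.1 i + x) this.symm
        simpa [← add_assoc, show v.1 i + v.1 i = 0 from
          (by rcases (by decide : ∀ x : ZMod 2, x + x = 0) (v.1 i) with h; exact h)] using h4
      rw [h2, wt] at hwchi
      simp at hwchi
      omega
    · show wt (v.1 + (v.1 + chi (s.1ᶜ))) = 2 * d
      rw [add_add_self]
      exact hwchi
  · -- left inverse
    rintro ⟨u, hu⟩
    apply Subtype.ext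
    apply Subtype.ext
    show v.1 + chi ((supp (u.1 + v.1))ᶜᶜ) = u.1
    rw [compl_compl, chi_supp, add_comm u.1 v.1, add_add_self]
  · -- right inverse
    intro s
    apply Subtype.ext
    show (supp (v.1 + chi (s.1ᶜ) + v.1))ᶜ = s.1
    rw [add_comm v.1 (chi (s.1ᶜ)), add_assoc, add_comm v.1 v.1]
    rw [show chi (s.1ᶜ) + (v.1 + v.1) = chi (s.1ᶜ) by
      funext i
      simp only [Pi.add_apply]
      rcases (by decide : ∀ x : ZMod 2, x + x = 0) (v.1 i) with h
      rw [h, add_zero]]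
    rw [supp_chi, compl_compl]
  · -- map_rel_iff
    rintro ⟨u, hu⟩ ⟨w, hw⟩
    show (kneser (3 * d) d).Adj _ _ ↔ (evenGraph (3 * d) (2 * d)).Adj u w
    have hAu : (supp (u.1 + v.1)).card = 2 * d := hA ⟨u, hu⟩
    have hAw : (supp (w.1 + v.1)).card = 2 * d := hA ⟨w, hw⟩
    set A := supp (u.1 + v.1) with hAdef
    set B := supp (w.1 + v.1) with hBdef
    have hne : A ≠ B ↔ u ≠ w := by
      constructor
      · intro h h2; exact h (by rw [hAdef, hBdef, h2])
      · intro h h2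
        apply h
        have := congrArg chi h2
        rw [chi_supp, chi_supp] at this
        apply Subtype.ext
        have := congrArg (fun x => x + v.1) this
        simpa [add_assoc, show v.1 + v.1 = (0 : Fin (3 * d) → ZMod 2) by
          funext i; exact (by rcases (by decide : ∀ x : ZMod 2, x + x = 0) (v.1 i) with h; exact h)]
          using this
    have hsupp : supp (u.1 + w.1) = A ∆ B := by
      rw [hAdef, hBdef, ← supp_add]
      congr 1
      funext i
      simp only [Pi.add_apply]
      rcases (by decide : ∀ x : ZMod 2, x + x = 0) (v.1 i) with h
      rw [show u.1 i + v.1 i + (w.1 i + v.1 i) = u.1 i + w.1 i + (v.1 i + v.1 i) by ring, h, add_zero]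
    have hcompl : ((supp (u.1 + v.1))ᶜ : Finset (Fin (3*d))) = Aᶜ := rfl
    have key : wt (u.1 + w.1) = 2 * d ↔ Disjoint Aᶜ Bᶜ := by
      rw [wt_eq_card_supp, hsupp]
      have h1 := card_symmDiff_aux A B
      have h2 := card_union_add_card_inter A B
      have h3 : (A ∪ B).card ≤ 3 * d := by
        have := card_le_card (subset_univ (A ∪ B))
        rwa [hcarduniv] at this
      have hfc : Fintype.card (Fin (3 * d)) = 3 * d := Fintype.card_fin _
      have hdisj : Disjoint Aᶜ Bᶜ ↔ (A ∪ B).card = 3 * d := by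
        rw [Finset.disjoint_iff_inter_eq_empty, ← Finset.compl_union]
        have hc := Finset.card_compl_add_card (A ∪ B)
        rw [hfc] at hc
        constructor
        · intro h
          rw [h, card_empty] at hc
          omega
        · intro h
          apply card_eq_zero.mp
          omega
      rw [hdisj]
      omega
    constructor
    · rintro ⟨h1, h2⟩
      refine ⟨hne.mp ?_, key.mpr h2⟩
      intro hAB
      exact h1 (Subtype.ext (congrArg compl hAB))
    · rintro ⟨h1, h2⟩
      refine ⟨?_, key.mp h2⟩
      intro hc
      have : Aᶜ = Bᶜ := congrArg Subtype.val hc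
      exact (hne.mpr h1) (by simpa using congrArg compl this)
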